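/- For graphs without node attributes and the graph GOSPA pseudometric d̃^{(c,ε)} computed by minimizing over the binary assignment matrices 𝒲_{X,Y}, one has d̃^{(c,ε)}(X,Y) = 0 if and only if X and Y are isomorphic, i.e., n_X = n_Y and there exists an n_X × n_X permutation matrix P with A_X P = P A_Y. -/

import Mathlib

open scoped BigOperators Matrix

namespace GraphGOSPA

/-- An undirected unweighted graph without node attributes: a number of nodes
together with a symmetric `{0,1}`-valued adjacency matrix with zero diagonal. -/
structure GraphNA where
  n : ℕ
  A : Matrix (Fin n) (Fin n) ℝ
  A_symm : A.IsSymm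
  A_01 : ∀ i j, A i j = 0 ∨ A i j = 1
  A_diag : ∀ i, A i i = 0

/-- Componentwise 1-norm of a matrix. -/
def onorm {m n : ℕ} (M : Matrix (Fin m) (Fin n) ℝ) : ℝ :=
  ∑ i, ∑ j, |M i j|

/-- The top-left `m × n` block of an `(m+1) × (n+1)` matrix. -/
def topLeft {m n : ℕ} (W : Matrix (Fin (m+1)) (Fin (n+1)) ℝ) :
    Matrix (Fin m) (Fin n) ℝ :=
  fun i j => W i.castSucc j.castSucc

/-- The set `𝒲_{X,Y}` of binary assignment matrices: entries in `{0,1}`,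
each of the first `nY` columns sums to 1, each of the first `nX` rows sums to 1,
and the bottom-right corner is 0. -/
def Wset (nX nY : ℕ) : Set (Matrix (Fin (nX+1)) (Fin (nY+1)) ℝ) :=
  {W | (∀ i j, W i j = 0 ∨ W i j = 1) ∧
    (∀ j : Fin nY, ∑ i, W i j.castSucc = 1) ∧
    (∀ i : Fin nX, ∑ j, W i.castSucc j = 1) ∧
    W (Fin.last nX) (Fin.last nY) = 0}

/-- The relaxed set `𝒲̄_{X,Y}`: nonnegative entries, with the same row/column sum
constraints and zero bottom-right corner. -/
def WbarSet (nX nY : ℕ) : Set (Matrix (Fin (nX+1)) (Fin (nY+1)) ℝ) :=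
  {W | (∀ i j, 0 ≤ W i j) ∧
    (∀ j : Fin nY, ∑ i, W i j.castSucc = 1) ∧
    (∀ i : Fin nX, ∑ j, W i.castSucc j = 1) ∧
    W (Fin.last nX) (Fin.last nY) = 0}

/-- The edge mismatch cost `e_{X,Y}(W)^p = (ε^p/2)‖A_X W' − W' A_Y‖`. -/
noncomputable def edgeCost (p ε : ℝ) (X Y : GraphNA)
    (W : Matrix (Fin (X.n+1)) (Fin (Y.n+1)) ℝ) : ℝ :=
  ε ^ p / 2 * onorm (X.A * topLeft W - topLeft W * Y.A)

/-- The unassignment cost `(c^p/2)(Σ_i W(i, n_Y+1) + Σ_j W(n_X+1, j))`. -/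
noncomputable def missFalseCost (p c : ℝ) (X Y : GraphNA)
    (W : Matrix (Fin (X.n+1)) (Fin (Y.n+1)) ℝ) : ℝ :=
  c ^ p / 2 * ((∑ i : Fin X.n, W i.castSucc (Fin.last Y.n)) +
    (∑ j : Fin Y.n, W (Fin.last X.n) j.castSucc))

/-- The graph GOSPA pseudometric `d̃^{(c,ε)}` for graphs without node attributes,
computed by minimizing over the binary assignment matrices `𝒲_{X,Y}`. -/
noncomputable def dtilde (p c ε : ℝ) (X Y : GraphNA) : ℝ :=
  sInf {v | ∃ W ∈ Wset X.n Y.n,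
    v = missFalseCost p c X Y W + edgeCost p ε X Y W} ^ (1 / p)

/-- A permutation matrix: a `{0,1}`-valued square matrix whose rows and columns
each sum to 1. -/
def IsPermMatrix {n : ℕ} (P : Matrix (Fin n) (Fin n) ℝ) : Prop :=
  (∀ i j, P i j = 0 ∨ P i j = 1) ∧
    (∀ i, ∑ j, P i j = 1) ∧ (∀ j, ∑ i, P i j = 1)

/-- Two graphs without node attributes are isomorphic if they have the same number of
nodes and there is a permutation matrix `P` with `A_X P = P A_Y`. -/
def Isomorphic (X Y : GraphNA) : Prop :=
  ∃ h : X.n = Y.n, ∃ P : Matrix (Fin X.n) (Fin X.n) ℝ, IsPermMatrix P ∧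
    X.A * P = P * (Y.A.submatrix (Fin.cast h) (Fin.cast h))

lemma onorm_nonneg' {m n : ℕ} (M : Matrix (Fin m) (Fin n) ℝ) : 0 ≤ onorm M :=
  Finset.sum_nonneg fun _ _ => Finset.sum_nonneg fun _ _ => abs_nonneg _

lemma eq_zero_of_onorm_eq_zero {m n : ℕ} {M : Matrix (Fin m) (Fin n) ℝ}
    (h : onorm M = 0) : M = 0 := by
  ext i j
  have h1 := (Finset.sum_eq_zero_iff_of_nonneg
    (fun i _ => Finset.sum_nonneg fun j _ => abs_nonneg (M i j))).mp h i (Finset.mem_univ i)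
  have h2 := (Finset.sum_eq_zero_iff_of_nonneg
    (fun j _ => abs_nonneg (M i j))).mp h1 j (Finset.mem_univ j)
  simpa using abs_eq_zero.mp h2

lemma binary_finite (m n : ℕ) :
    {W : Matrix (Fin m) (Fin n) ℝ | ∀ i j, W i j = 0 ∨ W i j = 1}.Finite := by
  classical
  apply Set.Finite.subset (Set.finite_range
    (fun b : Fin m → Fin n → Prop => (fun i j => if b i j then (1:ℝ) else 0 : Matrix (Fin m) (Fin n) ℝ)))
  intro W hW
  refine ⟨fun i j => W i j = 1, ?_⟩
  funext i j
  rcases hW i j with h | h <;> simp [h]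

lemma cost_nonneg (p c ε : ℝ) (hc : 0 < c) (hε : 0 < ε) (X Y : GraphNA)
    (W : Matrix (Fin (X.n+1)) (Fin (Y.n+1)) ℝ) (hW : W ∈ Wset X.n Y.n) :
    0 ≤ missFalseCost p c X Y W + edgeCost p ε X Y W := by
  have hWnn : ∀ i j, 0 ≤ W i j := fun i j => by
    rcases hW.1 i j with h | h <;> simp [h]
  have h1 : 0 ≤ missFalseCost p c X Y W := by
    apply mul_nonneg
    · positivity
    · exact add_nonneg (Finset.sum_nonneg fun i _ => hWnn _ _)
        (Finset.sum_nonneg fun j _ => hWnn _ _)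
  have h2 : 0 ≤ edgeCost p ε X Y W := by
    apply mul_nonneg
    · positivity
    · exact onorm_nonneg' _
  linarith

/-- The trivial all-unassigned matrix is in `Wset`. -/
lemma Wset_nonempty (nX nY : ℕ) : (Wset nX nY).Nonempty := by
  classical
  refine ⟨fun i j => if i = Fin.last nX then (if j = Fin.last nY then 0 else 1)
    else (if j = Fin.last nY then 1 else 0), ?_, ?_, ?_, ?_⟩
  · intro i j; dsimp only; split_ifs <;> simp
  · intro j
    rw [Fin.sum_univ_castSucc]
    have h1 : ∀ i : Fin nX, (i.castSucc : Fin (nX+1)) ≠ Fin.last nX :=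
      fun i => (Fin.castSucc_lt_last i).ne
    have h2 : (j.castSucc : Fin (nY+1)) ≠ Fin.last nY := (Fin.castSucc_lt_last j).ne
    simp [h1, h2]
  · intro i
    rw [Fin.sum_univ_castSucc]
    have h1 : (i.castSucc : Fin (nX+1)) ≠ Fin.last nX := (Fin.castSucc_lt_last i).ne
    have h2 : ∀ j : Fin nY, (j.castSucc : Fin (nY+1)) ≠ Fin.last nY :=
      fun j => (Fin.castSucc_lt_last j).ne
    simp [h1, h2]
  · simp

/-- For graphs without node attributes and the graph GOSPA
pseudometric `d̃^{(c,ε)}` computed by minimizing over the binary assignment matrices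
`𝒲_{X,Y}`, one has `d̃^{(c,ε)}(X,Y) = 0` if and only if `X` and `Y` are isomorphic,
i.e. `n_X = n_Y` and there exists a permutation matrix `P` with `A_X P = P A_Y`. -/
theorem dtilde_eq_zero_iff_isomorphic (p c ε : ℝ) (hp : 1 ≤ p) (hc : 0 < c)
    (hε : 0 < ε) (X Y : GraphNA) :
    dtilde p c ε X Y = 0 ↔ Isomorphic X Y := by
  classical
  have hp0 : p ≠ 0 := by linarith
  have hip : (1/p : ℝ) ≠ 0 := one_div_ne_zero hp0
  set S : Set ℝ := {v | ∃ W ∈ Wset X.n Y.n,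
    v = missFalseCost p c X Y W + edgeCost p ε X Y W} with hS
  have hSne : S.Nonempty := by
    obtain ⟨W, hW⟩ := Wset_nonempty X.n Y.n
    exact ⟨_, W, hW, rfl⟩
  have hlb : ∀ v ∈ S, (0:ℝ) ≤ v := by
    rintro v ⟨W, hW, rfl⟩
    exact cost_nonneg p c ε hc hε X Y W hW
  have hSfin : S.Finite := by
    apply Set.Finite.subset (Set.Finite.image
      (fun W => missFalseCost p c X Y W + edgeCost p ε X Y W) (binary_finite (X.n+1) (Y.n+1)))
    rintro v ⟨W, hW, rfl⟩
    exact ⟨W, hW.1, rfl⟩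
  have hd : dtilde p c ε X Y = sInf S ^ (1/p) := rfl
  constructor
  · -- forward
    intro h0
    rw [hd] at h0
    have hInf0 : sInf S = 0 := by
      have hnn : 0 ≤ sInf S := le_csInf hSne hlb
      exact (Real.rpow_eq_zero hnn hip).mp h0
    have hmem : (0:ℝ) ∈ S := hInf0 ▸ hSne.csInf_mem hSfin
    obtain ⟨W, hW, hcost⟩ := hmem
    have hWnn : ∀ i j, 0 ≤ W i j := fun i j => by
      rcases hW.1 i j with h | h <;> simp [h]
    have hmfc0 : missFalseCost p c X Y W = 0 ∧ edgeCost p ε X Y W = 0 := by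
      have h1 : 0 ≤ missFalseCost p c X Y W :=
        mul_nonneg (by positivity) (add_nonneg (Finset.sum_nonneg fun i _ => hWnn _ _)
          (Finset.sum_nonneg fun j _ => hWnn _ _))
      have h2 : 0 ≤ edgeCost p ε X Y W :=
        mul_nonneg (by positivity) (onorm_nonneg' _)
      constructor <;> linarith
    -- entries of last column / row vanish
    have hcp : (0:ℝ) < c ^ p / 2 := by positivity
    have hsum0 : (∑ i : Fin X.n, W i.castSucc (Fin.last Y.n)) +
        (∑ j : Fin Y.n, W (Fin.last X.n) j.castSucc) = 0 := by
      have := hmfc0.1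
      unfold missFalseCost at this
      rcases mul_eq_zero.mp this with h | h
      · exact absurd h hcp.ne'
      · exact h
    have hmiss : ∀ i : Fin X.n, W i.castSucc (Fin.last Y.n) = 0 := by
      have hs1 : (∑ i : Fin X.n, W i.castSucc (Fin.last Y.n)) = 0 := by
        have n1 : 0 ≤ ∑ i : Fin X.n, W i.castSucc (Fin.last Y.n) :=
          Finset.sum_nonneg fun i _ => hWnn _ _
        have n2 : 0 ≤ ∑ j : Fin Y.n, W (Fin.last X.n) j.castSucc :=
          Finset.sum_nonneg fun j _ => hWnn _ _
        linarith
      exact fun i => (Finset.sum_eq_zero_iff_of_nonneg (fun i _ => hWnn _ _)).mp hs1 i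
        (Finset.mem_univ i)
    have hfalse : ∀ j : Fin Y.n, W (Fin.last X.n) j.castSucc = 0 := by
      have hs2 : (∑ j : Fin Y.n, W (Fin.last X.n) j.castSucc) = 0 := by
        have n1 : 0 ≤ ∑ i : Fin X.n, W i.castSucc (Fin.last Y.n) :=
          Finset.sum_nonneg fun i _ => hWnn _ _
        have n2 : 0 ≤ ∑ j : Fin Y.n, W (Fin.last X.n) j.castSucc :=
          Finset.sum_nonneg fun j _ => hWnn _ _
        linarith
      exact fun j => (Finset.sum_eq_zero_iff_of_nonneg (fun j _ => hWnn _ _)).mp hs2 j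
        (Finset.mem_univ j)
    -- edge equality
    have hedge : X.A * topLeft W = topLeft W * Y.A := by
      have := hmfc0.2
      unfold edgeCost at this
      have hep : (0:ℝ) < ε ^ p / 2 := by positivity
      rcases mul_eq_zero.mp this with h | h
      · exact absurd h hep.ne'
      · exact sub_eq_zero.mp (eq_zero_of_onorm_eq_zero h)
    -- row and column sums of topLeft W
    have hrow : ∀ i : Fin X.n, ∑ j : Fin Y.n, topLeft W i j = 1 := by
      intro i
      have := hW.2.2.1 i
      rw [Fin.sum_univ_castSucc] at this
      rw [hmiss i] at this
      simpa [topLeft] using this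
    have hcol : ∀ j : Fin Y.n, ∑ i : Fin X.n, topLeft W i j = 1 := by
      intro j
      have := hW.2.1 j
      rw [Fin.sum_univ_castSucc] at this
      rw [hfalse j] at this
      simpa [topLeft] using this
    -- same size
    have hn : X.n = Y.n := by
      have hx : (X.n : ℝ) = ∑ i : Fin X.n, ∑ j : Fin Y.n, topLeft W i j := by
        simp [hrow]
      have hy : (Y.n : ℝ) = ∑ i : Fin X.n, ∑ j : Fin Y.n, topLeft W i j := by
        rw [show (∑ i : Fin X.n, ∑ j : Fin Y.n, topLeft W i j)
            = ∑ j : Fin Y.n, ∑ i : Fin X.n, topLeft W i j from Finset.sum_comm]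
        simp [hcol]
      exact_mod_cast hx.trans hy.symm
    refine ⟨hn, Matrix.of fun i j => topLeft W i (Fin.cast hn j), ⟨?_, ?_, ?_⟩, ?_⟩
    · intro i j; exact hW.1 _ _
    · intro i
      show ∑ j : Fin X.n, topLeft W i (Fin.cast hn j) = 1
      rw [Fintype.sum_equiv (finCongr hn) _ (fun j' => topLeft W i j')
        (fun x => by simp only [finCongr_apply])]
      exact hrow i
    · intro j
      show ∑ i : Fin X.n, topLeft W i (Fin.cast hn j) = 1
      exact hcol (Fin.cast hn j)
    · ext i j
      rw [Matrix.mul_apply, Matrix.mul_apply]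
      simp only [Matrix.of_apply, Matrix.submatrix_apply]
      have lhs_eq : ∑ k, X.A i k * topLeft W k (Fin.cast hn j)
          = (X.A * topLeft W) i (Fin.cast hn j) := (Matrix.mul_apply).symm
      rw [lhs_eq, hedge, Matrix.mul_apply]
      apply Fintype.sum_equiv (finCongr hn.symm)
      intro x
      simp only [finCongr_apply]
      rfl
  · -- backward
    rintro ⟨h, P, ⟨hP01, hProw, hPcol⟩, hAP⟩
    set W : Matrix (Fin (X.n+1)) (Fin (Y.n+1)) ℝ :=
      fun i j => if hij : (i : ℕ) < X.n ∧ (j : ℕ) < Y.n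
        then P ⟨i, hij.1⟩ (Fin.cast h.symm ⟨j, hij.2⟩) else 0 with hWdef
    have htl : ∀ i j, topLeft W i j = P i (Fin.cast h.symm j) := by
      intro i j
      have hij : ((i.castSucc : Fin (X.n+1)) : ℕ) < X.n ∧
          ((j.castSucc : Fin (Y.n+1)) : ℕ) < Y.n := ⟨by simp, by simp⟩
      show W i.castSucc j.castSucc = _
      simp only [hWdef]
      rw [dif_pos hij]
      rfl
    have hlastcol : ∀ i : Fin X.n, W i.castSucc (Fin.last Y.n) = 0 := by
      intro i
      simp only [hWdef]
      rw [dif_neg (by simp)]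
    have hlastrow : ∀ j : Fin Y.n, W (Fin.last X.n) j.castSucc = 0 := by
      intro j
      simp only [hWdef]
      rw [dif_neg (by simp)]
    have hWmem : W ∈ Wset X.n Y.n := by
      refine ⟨?_, ?_, ?_, ?_⟩
      · intro i j
        simp only [hWdef]
        split_ifs with hh
        · exact hP01 _ _
        · exact Or.inl rfl
      · intro j
        rw [Fin.sum_univ_castSucc]
        rw [hlastrow j]
        have : ∀ i : Fin X.n, W i.castSucc j.castSucc = P i (Fin.cast h.symm j) :=
          fun i => htl i j
        simp only [this, add_zero]
        exact hPcol (Fin.cast h.symm j)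
      · intro i
        rw [Fin.sum_univ_castSucc]
        rw [hlastcol i]
        have : ∀ j : Fin Y.n, W i.castSucc j.castSucc = P i (Fin.cast h.symm j) :=
          fun j => htl i j
        simp only [this, add_zero]
        rw [Fintype.sum_equiv (finCongr h.symm) _ (fun j' => P i j') (fun x => by simp)]
        exact hProw i
      · simp only [hWdef]; rw [dif_neg (by simp)]
    have hmfc : missFalseCost p c X Y W = 0 := by
      unfold missFalseCost
      simp [hlastcol, hlastrow]
    have hec : edgeCost p ε X Y W = 0 := by
      unfold edgeCost
      have hz : X.A * topLeft W - topLeft W * Y.A = 0 := by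
        rw [sub_eq_zero]
        ext i j
        rw [Matrix.mul_apply, Matrix.mul_apply]
        simp only [htl]
        have lhs_eq : ∑ k : Fin X.n, X.A i k * P k (Fin.cast h.symm j)
            = (X.A * P) i (Fin.cast h.symm j) := (Matrix.mul_apply).symm
        rw [lhs_eq, hAP, Matrix.mul_apply]
        apply Fintype.sum_equiv (finCongr h)
        intro x
        simp only [finCongr_apply, Matrix.submatrix_apply]
        rfl
      rw [hz]
      simp [onorm]
    have h0mem : (0:ℝ) ∈ S := ⟨W, hWmem, by rw [hmfc, hec, add_zero]⟩
    have hInf0 : sInf S = 0 := le_antisymm (csInf_le ⟨0, hlb⟩ h0mem) (le_csInf ⟨0, h0mem⟩ hlb)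
    rw [hd, hInf0]
    exact Real.zero_rpow hip

end GraphGOSPA
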